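/- Let A = ℝ[X,Y]/(X³Y, X²Y², Y⁴, X³−Y³). Then every ℝ-algebra automorphism φ of A has linear part on 𝔫/𝔫² equal to the scalar matrix diag(A, A) for some real A ≠ 0; i.e., φ(X) ≡ AX and φ(Y) ≡ AY modulo 𝔫². -/

import Mathlib

/-- The Weil algebra `A = ℝ[X,Y]/(X³Y, X²Y², Y⁴, X³−Y³)`. -/
noncomputable abbrev WB : Type :=
  MvPolynomial (Fin 2) ℝ ⧸
    (Ideal.span {(MvPolynomial.X 0 : MvPolynomial (Fin 2) ℝ) ^ 3 * MvPolynomial.X 1,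
      (MvPolynomial.X 0) ^ 2 * (MvPolynomial.X 1) ^ 2, (MvPolynomial.X 1) ^ 4,
      (MvPolynomial.X 0) ^ 3 - (MvPolynomial.X 1) ^ 3} : Ideal (MvPolynomial (Fin 2) ℝ))

/-- The residue class of `X`. -/
noncomputable def bx : WB := Ideal.Quotient.mk _ (MvPolynomial.X 0)

/-- The residue class of `Y`. -/
noncomputable def bY : WB := Ideal.Quotient.mk _ (MvPolynomial.X 1)

/-- The maximal (nilpotent) ideal `𝔫 = (X, Y)` of `A`. -/
noncomputable def mIdeal : Ideal WB := Ideal.span {bx, bY}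

open MvPolynomial

noncomputable section
abbrev R2 := MvPolynomial (Fin 2) ℝ
abbrev Iw : Ideal R2 := Ideal.span {(X 0 : R2) ^ 3 * X 1, (X 0)^2 * (X 1)^2, (X 1)^4, (X 0)^3 - (X 1)^3}
def Jw : Ideal R2 := Ideal.span {(X 0 : R2), X 1}

-- exponent vectors
def e (i j : ℕ) : Fin 2 →₀ ℕ := Finsupp.single 0 i + Finsupp.single 1 j

lemma e_apply0 (i j : ℕ) : e i j 0 = i := by simp [e]
lemma e_apply1 (i j : ℕ) : e i j 1 = j := by simp [e]

lemma fle {s m : Fin 2 →₀ ℕ} : s ≤ m ↔ s 0 ≤ m 0 ∧ s 1 ≤ m 1 := by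
  rw [Finsupp.le_def, Fin.forall_fin_two]

lemma fext {s m : Fin 2 →₀ ℕ} (h0 : s 0 = m 0) (h1 : s 1 = m 1) : s = m := by
  ext i; revert i; rw [Fin.forall_fin_two]; exact ⟨h0, h1⟩

lemma feq {s m : Fin 2 →₀ ℕ} : s = m ↔ s 0 = m 0 ∧ s 1 = m 1 := by
  constructor
  · rintro rfl; exact ⟨rfl, rfl⟩
  · rintro ⟨h0, h1⟩; exact fext h0 h1

lemma e_le_e {i j k l : ℕ} : e i j ≤ e k l ↔ i ≤ k ∧ j ≤ l := by
  simp [fle, e_apply0, e_apply1]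

lemma e_eq_e {i j k l : ℕ} : e i j = e k l ↔ i = k ∧ j = l := by
  simp [feq, e_apply0, e_apply1]

lemma e_sub {i j k l : ℕ} : e i j - e k l = e (i - k) (j - l) := by
  apply fext <;> simp [e, Finsupp.tsub_apply]

lemma Xm {i j : ℕ} : (X 0 : R2)^i * (X 1)^j = monomial (e i j) 1 := by
  rw [X_pow_eq_monomial, X_pow_eq_monomial, monomial_mul, one_mul, e]

lemma coeff_mul_mono (m s : Fin 2 →₀ ℕ) (q : R2) :
    coeff m (q * monomial s 1) = if s ≤ m then coeff (m - s) q else 0 := by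
  rw [coeff_mul_monomial']; split <;> simp

lemma Iw_decomp {p : R2} (hp : p ∈ Iw) :
    ∃ q1 q2 q3 q4 : R2, p = q1 * ((X 0 : R2) ^ 3 * X 1) + q2 * ((X 0)^2 * (X 1)^2)
      + q3 * ((X 1)^4) + q4 * ((X 0)^3 - (X 1)^3) := by
  rw [Iw, Ideal.span, show ({(X 0 : R2) ^ 3 * X 1, (X 0)^2 * (X 1)^2, (X 1)^4, (X 0)^3 - (X 1)^3} : Set R2)
    = insert ((X 0 : R2) ^ 3 * X 1) (insert ((X 0:R2)^2 * (X 1)^2) (insert ((X 1:R2)^4) {(X 0:R2)^3 - (X 1)^3})) from rfl] at hp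
  rw [Submodule.mem_span_insert] at hp
  obtain ⟨q1, z1, hz1, rfl⟩ := hp
  rw [Submodule.mem_span_insert] at hz1
  obtain ⟨q2, z2, hz2, rfl⟩ := hz1
  rw [Submodule.mem_span_insert] at hz2
  obtain ⟨q3, z3, hz3, rfl⟩ := hz2
  rw [Submodule.mem_span_singleton] at hz3
  obtain ⟨q4, rfl⟩ := hz3
  exact ⟨q1, q2, q3, q4, by simp only [smul_eq_mul]; ring⟩

lemma g1m : (X 0 : R2) ^ 3 * X 1 = monomial (e 3 1) 1 := by rw [← Xm, pow_one]
lemma g2m : (X 0 : R2) ^ 2 * (X 1)^2 = monomial (e 2 2) 1 := Xm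
lemma g3m : ((X 1 : R2))^4 = monomial (e 0 4) 1 := by rw [← Xm, pow_zero, one_mul]
lemma g4m : (X 0 : R2)^3 - (X 1)^3 = monomial (e 3 0) 1 - monomial (e 0 3) 1 := by
  rw [← Xm, ← Xm]; ring

lemma lam0_Iw {p : R2} (hp : p ∈ Iw) : coeff (e 0 0) p = 0 := by
  obtain ⟨q1, q2, q3, q4, rfl⟩ := Iw_decomp hp
  simp [g1m, g2m, g3m, g4m, mul_sub, coeff_mul_mono, e_le_e, e_sub]

lemma lamX_Iw {p : R2} (hp : p ∈ Iw) : coeff (e 1 0) p = 0 := by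
  obtain ⟨q1, q2, q3, q4, rfl⟩ := Iw_decomp hp
  simp [g1m, g2m, g3m, g4m, mul_sub, coeff_mul_mono, e_le_e, e_sub]

lemma lamY_Iw {p : R2} (hp : p ∈ Iw) : coeff (e 0 1) p = 0 := by
  obtain ⟨q1, q2, q3, q4, rfl⟩ := Iw_decomp hp
  simp [g1m, g2m, g3m, g4m, mul_sub, coeff_mul_mono, e_le_e, e_sub]

lemma lamA_Iw {p : R2} (hp : p ∈ Iw) : coeff (e 2 1) p = 0 := by
  obtain ⟨q1, q2, q3, q4, rfl⟩ := Iw_decomp hp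
  simp [g1m, g2m, g3m, g4m, mul_sub, coeff_mul_mono, e_le_e, e_sub]

lemma lamB_Iw {p : R2} (hp : p ∈ Iw) : coeff (e 1 2) p = 0 := by
  obtain ⟨q1, q2, q3, q4, rfl⟩ := Iw_decomp hp
  simp [g1m, g2m, g3m, g4m, mul_sub, coeff_mul_mono, e_le_e, e_sub]

lemma lamC_Iw {p : R2} (hp : p ∈ Iw) : coeff (e 3 0) p + coeff (e 0 3) p = 0 := by
  obtain ⟨q1, q2, q3, q4, rfl⟩ := Iw_decomp hp
  simp [g1m, g2m, g3m, g4m, mul_sub, coeff_mul_mono, e_le_e, e_sub]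

lemma lam4_Iw {p : R2} (hp : p ∈ Iw) : coeff (e 4 0) p + coeff (e 1 3) p = 0 := by
  obtain ⟨q1, q2, q3, q4, rfl⟩ := Iw_decomp hp
  simp [g1m, g2m, g3m, g4m, mul_sub, coeff_mul_mono, e_le_e, e_sub]

lemma X0m : (X 0 : R2) = monomial (e 1 0) 1 := by
  have := @Xm 1 0; rw [pow_one, pow_zero, mul_one] at this; exact this
lemma X1m : (X 1 : R2) = monomial (e 0 1) 1 := by
  have := @Xm 0 1; rw [pow_one, pow_zero, one_mul] at this; exact this

lemma coeff_J_pow : ∀ k : ℕ, ∀ p ∈ Jw ^ k, ∀ m : Fin 2 →₀ ℕ, m 0 + m 1 < k → coeff m p = 0 := by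
  intro k
  induction k with
  | zero => intro p _ m hm; omega
  | succ k ih =>
    intro p hp
    rw [pow_succ] at hp
    refine Submodule.mul_induction_on hp (fun x hx y hy => ?_) (fun x y ihx ihy m hm => ?_)
    · intro m hm
      obtain ⟨u, v, rfl⟩ := Ideal.mem_span_pair.mp hy
      have h1 : x * (u * X 0 + v * X 1) = (u * x) * monomial (e 1 0) 1 + (v * x) * monomial (e 0 1) 1 := by
        rw [← X0m, ← X1m]; ring
      rw [h1, coeff_add, coeff_mul_mono, coeff_mul_mono]
      have hux : u * x ∈ Jw ^ k := Ideal.mul_mem_left _ _ hx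
      have hvx : v * x ∈ Jw ^ k := Ideal.mul_mem_left _ _ hx
      split_ifs with h2 h3 h3
      · rw [ih _ hux _ (by have := fle.mp h2; simp [Finsupp.tsub_apply, e_apply0, e_apply1] at *; omega),
          ih _ hvx _ (by have := fle.mp h3; simp [Finsupp.tsub_apply, e_apply0, e_apply1] at *; omega)]
        ring
      · rw [ih _ hux _ (by have := fle.mp h2; simp [Finsupp.tsub_apply, e_apply0, e_apply1] at *; omega)]
        ring
      · rw [ih _ hvx _ (by have := fle.mp h3; simp [Finsupp.tsub_apply, e_apply0, e_apply1] at *; omega)]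
        ring
      · ring
    · rw [coeff_add, ihx m hm, ihy m hm]; ring

lemma e00 : e 0 0 = (0 : Fin 2 →₀ ℕ) := by
  apply fext <;> simp [e_apply0, e_apply1]

lemma mono_factor {m s : Fin 2 →₀ ℕ} (h : s ≤ m) (c : ℝ) :
    monomial m c = monomial (m - s) c * monomial s 1 := by
  rw [monomial_mul, mul_one, tsub_add_cancel_of_le h]

lemma X0_mem : (X 0 : R2) ∈ Jw := Ideal.subset_span (by simp)
lemma X1_mem : (X 1 : R2) ∈ Jw := Ideal.subset_span (by simp [Set.mem_insert_iff])

lemma mono_mem_J2 {m : Fin 2 →₀ ℕ} (h : 2 ≤ m 0 + m 1) (c : ℝ) : monomial m c ∈ Jw ^ 2 := by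
  rw [pow_two]
  rcases Nat.lt_or_ge (m 0) 1 with h0 | h0
  · -- m 0 = 0, m 1 ≥ 2
    have hle : e 0 2 ≤ m := fle.mpr (by simp [e_apply0, e_apply1]; omega)
    rw [mono_factor hle c, show monomial (e 0 2) (1:ℝ) = X 1 * X 1 by rw [← Xm]; ring]
    exact Ideal.mul_mem_left _ _ (Ideal.mul_mem_mul X1_mem X1_mem)
  · rcases Nat.lt_or_ge (m 0) 2 with h1 | h1
    · -- m 0 = 1, m 1 ≥ 1
      have hle : e 1 1 ≤ m := fle.mpr (by simp [e_apply0, e_apply1]; omega)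
      rw [mono_factor hle c, show monomial (e 1 1) (1:ℝ) = X 0 * X 1 by rw [← Xm]; ring]
      exact Ideal.mul_mem_left _ _ (Ideal.mul_mem_mul X0_mem X1_mem)
    · have hle : e 2 0 ≤ m := fle.mpr (by simp [e_apply0, e_apply1]; omega)
      rw [mono_factor hle c, show monomial (e 2 0) (1:ℝ) = X 0 * X 0 by rw [← Xm]; ring]
      exact Ideal.mul_mem_left _ _ (Ideal.mul_mem_mul X0_mem X0_mem)

lemma mem_J2_of_coeff {p : R2} (h0 : coeff (e 0 0) p = 0) (hX : coeff (e 1 0) p = 0)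
    (hY : coeff (e 0 1) p = 0) : p ∈ Jw ^ 2 := by
  rw [p.as_sum]
  refine Submodule.sum_mem _ (fun m hm => ?_)
  refine mono_mem_J2 ?_ _
  by_contra hc
  push_neg at hc
  have hcase : (m 0 = 0 ∧ m 1 = 0) ∨ (m 0 = 1 ∧ m 1 = 0) ∨ (m 0 = 0 ∧ m 1 = 1) := by omega
  rcases hcase with ⟨h, h'⟩ | ⟨h, h'⟩ | ⟨h, h'⟩
  · exact (mem_support_iff.mp hm) (by rwa [show m = e 0 0 from fext (by simp [e_apply0, h]) (by simp [e_apply1, h'])])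
  · exact (mem_support_iff.mp hm) (by rwa [show m = e 1 0 from fext (by simp [e_apply0, h]) (by simp [e_apply1, h'])])
  · exact (mem_support_iff.mp hm) (by rwa [show m = e 0 1 from fext (by simp [e_apply0, h]) (by simp [e_apply1, h'])])

-- downstairs
abbrev WB' : Type := R2 ⧸ Iw
def mkw : R2 →+* WB' := Ideal.Quotient.mk Iw

lemma mul_mem_pow {i j : ℕ} {x y : R2} (hx : x ∈ Jw ^ i) (hy : y ∈ Jw ^ j) :
    x * y ∈ Jw ^ (i + j) := by
  rw [pow_add]; exact Ideal.mul_mem_mul hx hy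

lemma g4_mem : (X 0 : R2)^3 - (X 1)^3 ∈ Iw := Ideal.subset_span (by simp [Set.mem_insert_iff])
lemma g3_mem : ((X 1 : R2))^4 ∈ Iw := Ideal.subset_span (by simp [Set.mem_insert_iff])
lemma g2_mem : (X 0 : R2)^2 * (X 1)^2 ∈ Iw := Ideal.subset_span (by simp [Set.mem_insert_iff])
lemma g1_mem : (X 0 : R2)^3 * (X 1) ∈ Iw := Ideal.subset_span (by simp [Set.mem_insert_iff])

lemma X05_mem : (X 0 : R2)^5 ∈ Iw := by
  have h : (X 0 : R2)^5 = X 0^2 * ((X 0)^3 - (X 1)^3) + X 1 * ((X 0)^2 * (X 1)^2) := by ring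
  rw [h]
  exact Ideal.add_mem _ (Ideal.mul_mem_left _ _ g4_mem) (Ideal.mul_mem_left _ _ g2_mem)

lemma X15_mem : (X 1 : R2)^5 ∈ Iw := by
  have h : (X 1 : R2)^5 = X 1 * (X 1)^4 := by ring
  rw [h]; exact Ideal.mul_mem_left _ _ g3_mem

lemma L_mem (a b : ℝ) : C a * (X 0 : R2) + C b * X 1 ∈ Jw :=
  Ideal.add_mem _ (Ideal.mul_mem_left _ _ X0_mem) (Ideal.mul_mem_left _ _ X1_mem)

-- canonical representative of a 5-nilpotent element
lemma rep_of_nilp (z : WB') (hz : z ^ 5 = 0) :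
    ∃ (a b : ℝ) (r : R2), r ∈ Jw ^ 2 ∧ z = mkw (C a * X 0 + C b * X 1 + r) := by
  obtain ⟨p, hp⟩ := Ideal.Quotient.mk_surjective z
  have h5 : p ^ 5 ∈ Iw := by
    rw [← Ideal.Quotient.eq_zero_iff_mem]
    calc Ideal.Quotient.mk Iw (p ^ 5) = z ^ 5 := by rw [← hp]; exact map_pow _ p 5
    _ = 0 := hz
  have hc0 : coeff (e 0 0) p = 0 := by
    have h1 : coeff (e 0 0) (p ^ 5) = 0 := lam0_Iw h5
    have h2 : coeff (e 0 0) (p ^ 5) = (coeff (e 0 0) p) ^ 5 := by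
      rw [e00]
      show constantCoeff (p ^ 5) = (constantCoeff p) ^ 5
      exact map_pow _ _ _
    have := h1 ▸ h2
    exact pow_eq_zero_iff (by norm_num) |>.mp this.symm
  refine ⟨coeff (e 1 0) p, coeff (e 0 1) p,
    p - C (coeff (e 1 0) p) * X 0 - C (coeff (e 0 1) p) * X 1, ?_, ?_⟩
  · refine mem_J2_of_coeff ?_ ?_ ?_ <;>
      simp [coeff_sub, coeff_C_mul, X0m, X1m, coeff_monomial, e_eq_e, hc0]
  · rw [← hp]; congr 1; ring

lemma monoC (i j : ℕ) (c : ℝ) : monomial (e i j) c = C c * ((X 0:R2)^i * (X 1)^j) := by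
  rw [Xm, C_mul_monomial, mul_one]

lemma L3_expand (a b : ℝ) : (C a * (X 0 : R2) + C b * X 1)^3
    = monomial (e 3 0) (a^3) + monomial (e 2 1) (3*a^2*b)
      + monomial (e 1 2) (3*a*b^2) + monomial (e 0 3) (b^3) := by
  rw [monoC, monoC, monoC, monoC]
  simp only [map_pow, map_mul, map_ofNat, map_add]
  ring

lemma L4_expand (a b : ℝ) : (C a * (X 0 : R2) + C b * X 1)^4
    = monomial (e 4 0) (a^4) + monomial (e 3 1) (4*a^3*b)
      + monomial (e 2 2) (6*a^2*b^2) + monomial (e 1 3) (4*a*b^3) + monomial (e 0 4) (b^4) := by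
  rw [monoC, monoC, monoC, monoC, monoC]
  simp only [map_pow, map_mul, map_ofNat, map_add]
  ring

lemma coeff_L3_A (a b : ℝ) : coeff (e 2 1) ((C a * (X 0 : R2) + C b * X 1)^3) = 3*a^2*b := by
  rw [L3_expand]; simp [coeff_monomial, e_eq_e]

lemma coeff_L3_B (a b : ℝ) : coeff (e 1 2) ((C a * (X 0 : R2) + C b * X 1)^3) = 3*a*b^2 := by
  rw [L3_expand]; simp [coeff_monomial, e_eq_e]

lemma coeff_L3_C (a b : ℝ) : coeff (e 3 0) ((C a * (X 0 : R2) + C b * X 1)^3)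
    + coeff (e 0 3) ((C a * (X 0 : R2) + C b * X 1)^3) = a^3 + b^3 := by
  rw [L3_expand]; simp [coeff_monomial, e_eq_e]

lemma coeff_L4_4 (a b : ℝ) : coeff (e 4 0) ((C a * (X 0 : R2) + C b * X 1)^4)
    + coeff (e 1 3) ((C a * (X 0 : R2) + C b * X 1)^4) = a^4 + 4*a*b^3 := by
  rw [L4_expand]; simp [coeff_monomial, e_eq_e]

-- cross terms
lemma rpow_mem {r : R2} (hr : r ∈ Jw ^ 2) (k : ℕ) : r ^ k ∈ Jw ^ (2*k) := by
  rw [pow_mul]; exact Ideal.pow_mem_pow hr k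

lemma cube_cross {a b : ℝ} {r : R2} (hr : r ∈ Jw ^ 2) :
    (C a * (X 0 : R2) + C b * X 1 + r)^3 - (C a * (X 0 : R2) + C b * X 1)^3 ∈ Jw ^ 4 := by
  set L := C a * (X 0 : R2) + C b * X 1 with hL
  have hLJ : L ∈ Jw := L_mem a b
  have h : (L + r)^3 - L^3 = (3 : R2) * (L^2 * r) + 3 * (L * r^2) + r^3 := by ring
  rw [h]
  have h1 : L^2 * r ∈ Jw ^ 4 := mul_mem_pow (Ideal.pow_mem_pow hLJ 2) hr
  have h2 : L * r^2 ∈ Jw ^ 5 := by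
    have : L * r^2 ∈ Jw ^ (1 + 2*2) := mul_mem_pow (by simpa using hLJ) (rpow_mem hr 2)
    simpa using this
  have h3 : r^3 ∈ Jw ^ 6 := by simpa using rpow_mem hr 3
  exact Ideal.add_mem _ (Ideal.add_mem _ (Ideal.mul_mem_left _ _ h1)
    (Ideal.mul_mem_left _ _ (Ideal.pow_le_pow_right (by omega) h2)))
    (Ideal.pow_le_pow_right (by omega) h3)

lemma quart_cross {a b : ℝ} {r : R2} (hr : r ∈ Jw ^ 2) :
    (C a * (X 0 : R2) + C b * X 1 + r)^4 - (C a * (X 0 : R2) + C b * X 1)^4 ∈ Jw ^ 5 := by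
  set L := C a * (X 0 : R2) + C b * X 1 with hL
  have hLJ : L ∈ Jw := L_mem a b
  have h : (L + r)^4 - L^4 = (4 : R2) * (L^3 * r) + 6 * (L^2 * r^2) + 4 * (L * r^3) + r^4 := by
    ring
  rw [h]
  have h1 : L^3 * r ∈ Jw ^ 5 := mul_mem_pow (Ideal.pow_mem_pow hLJ 3) hr
  have h2 : L^2 * r^2 ∈ Jw ^ 6 := by
    have : L^2 * r^2 ∈ Jw ^ (2 + 2*2) := mul_mem_pow (Ideal.pow_mem_pow hLJ 2) (rpow_mem hr 2)
    simpa using this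
  have h3 : L * r^3 ∈ Jw ^ 7 := by
    have : L * r^3 ∈ Jw ^ (1 + 2*3) := mul_mem_pow (by simpa using hLJ) (rpow_mem hr 3)
    simpa using this
  have h4 : r^4 ∈ Jw ^ 8 := by simpa using rpow_mem hr 4
  refine Ideal.add_mem _ (Ideal.add_mem _ (Ideal.add_mem _ (Ideal.mul_mem_left _ _ h1)
    (Ideal.mul_mem_left _ _ (Ideal.pow_le_pow_right (by omega) h2)))
    (Ideal.mul_mem_left _ _ (Ideal.pow_le_pow_right (by omega) h3)))
    (Ideal.pow_le_pow_right (by omega) h4)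

end


noncomputable section

lemma WB_eq : WB = WB' := rfl
lemma bx_eq : bx = mkw (X 0) := rfl
lemma bY_eq : bY = mkw (X 1) := rfl

lemma mIdeal_eq : mIdeal = Ideal.map mkw Jw := by
  rw [mIdeal, Jw, Ideal.map_span]
  congr 1
  rw [Set.image_insert_eq, Set.image_singleton, bx_eq, bY_eq]

lemma mem_mIdeal2 {r : R2} (hr : r ∈ Jw ^ 2) : mkw r ∈ mIdeal ^ 2 := by
  rw [mIdeal_eq, ← Ideal.map_pow]
  exact Ideal.mem_map_of_mem _ hr

lemma mIdeal2_rep {z : WB} (hz : z ∈ mIdeal ^ 2) : ∃ w ∈ Jw ^ 2, mkw w = z := by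
  rw [mIdeal_eq, ← Ideal.map_pow] at hz
  exact Ideal.mem_map_iff_of_surjective _ Ideal.Quotient.mk_surjective |>.mp hz

lemma bx5 : bx ^ 5 = 0 := by
  rw [bx_eq, ← map_pow mkw (X 0) 5]
  exact Ideal.Quotient.eq_zero_iff_mem.mpr X05_mem

lemma bY5 : bY ^ 5 = 0 := by
  rw [bY_eq, ← map_pow mkw (X 1) 5]
  exact Ideal.Quotient.eq_zero_iff_mem.mpr X15_mem

lemma smul_mkw (A : ℝ) (p : R2) : A • mkw p = mkw (C A * p) := by
  rw [← smul_eq_C_mul]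
  exact (Submodule.Quotient.mk_smul Iw A p).symm

end

noncomputable section
lemma coeff_e10_X0 : coeff (e 1 0) (X 0 : R2) = 1 := by
  rw [X0m, coeff_monomial]; simp
lemma coeff_e01_X0 : coeff (e 0 1) (X 0 : R2) = 0 := by
  rw [X0m, coeff_monomial]; simp [e_eq_e]
lemma coeff_e10_X1 : coeff (e 1 0) (X 1 : R2) = 0 := by
  rw [X1m, coeff_monomial]; simp [e_eq_e]
lemma coeff_e01_X1 : coeff (e 0 1) (X 1 : R2) = 1 := by
  rw [X1m, coeff_monomial]; simp

lemma coeff_lin10 (u v : ℝ) {t : R2} (ht : t ∈ Jw ^ 2) :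
    coeff (e 1 0) (C u * X 0 + C v * X 1 + t) = u := by
  have h := coeff_J_pow 2 _ ht (e 1 0) (by simp [e_apply0, e_apply1])
  simp [coeff_add, coeff_C_mul, coeff_e10_X0, coeff_e10_X1, h]

lemma coeff_lin01 (u v : ℝ) {t : R2} (ht : t ∈ Jw ^ 2) :
    coeff (e 0 1) (C u * X 0 + C v * X 1 + t) = v := by
  have h := coeff_J_pow 2 _ ht (e 0 1) (by simp [e_apply0, e_apply1])
  simp [coeff_add, coeff_C_mul, coeff_e01_X0, coeff_e01_X1, h]

lemma cube_inj {x y : ℝ} (h : x ^ 3 = y ^ 3) : x = y :=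
  (Odd.strictMono_pow (R := ℝ) (by decide)).injective h
end


set_option maxHeartbeats 2000000 in
/-- Every ℝ-algebra automorphism `φ` of `A = ℝ[X,Y]/(X³Y, X²Y², Y⁴, X³−Y³)` has linear
part on `𝔫/𝔫²` equal to the scalar matrix `diag(A, A)` for some real `A ≠ 0`; i.e.,
`φ(X) ≡ AX` and `φ(Y) ≡ AY` modulo `𝔫²`. -/
theorem stmt12 (φ : WB ≃ₐ[ℝ] WB) :
    ∃ a : ℝ, a ≠ 0 ∧ φ bx - a • bx ∈ mIdeal ^ 2 ∧ φ bY - a • bY ∈ mIdeal ^ 2 := by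
  classical
  -- nilpotency of images
  have hn1 : (φ bx) ^ 5 = 0 := by rw [← map_pow, bx5, map_zero]
  have hn2 : (φ bY) ^ 5 = 0 := by rw [← map_pow, bY5, map_zero]
  have hn3 : (φ.symm bx) ^ 5 = 0 := by rw [← map_pow, bx5, map_zero]
  have hn4 : (φ.symm bY) ^ 5 = 0 := by rw [← map_pow, bY5, map_zero]
  obtain ⟨a, b, r, hr, hP⟩ := rep_of_nilp (φ bx) hn1
  obtain ⟨c, d, s, hs, hQ⟩ := rep_of_nilp (φ bY) hn2
  obtain ⟨a2, b2, r2, hr2, hP2⟩ := rep_of_nilp (φ.symm bx) hn3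
  obtain ⟨c2, d2, s2, hs2, hQ2⟩ := rep_of_nilp (φ.symm bY) hn4
  set L : R2 := C a * X 0 + C b * X 1 with hLdef
  set L' : R2 := C c * X 0 + C d * X 1 with hL'def
  -- relation Y⁴ = 0
  have hbY4 : bY ^ 4 = 0 := by
    rw [bY_eq, ← map_pow mkw (X 1) 4]
    exact Ideal.Quotient.eq_zero_iff_mem.mpr g3_mem
  have hQ4 : (L' + s) ^ 4 ∈ Iw := by
    rw [← Ideal.Quotient.eq_zero_iff_mem, show Ideal.Quotient.mk Iw ((L' + s)^4) = mkw ((L' + s)^4) from rfl,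
      map_pow mkw _ 4, ← hQ, show φ bY ^ 4 = φ (bY ^ 4) from (map_pow φ bY 4).symm, hbY4, map_zero]
  have hcrossQ4 := quart_cross (a := c) (b := d) hs
  have hE3 : c^4 + 4*c*d^3 = 0 := by
    have h1 := lam4_Iw hQ4
    have h2 := coeff_J_pow 5 _ hcrossQ4 (e 4 0) (by simp [e_apply0, e_apply1])
    have h3 := coeff_J_pow 5 _ hcrossQ4 (e 1 3) (by simp [e_apply0, e_apply1])
    rw [coeff_sub] at h2 h3
    have h4 := coeff_L4_4 c d
    rw [← hL'def] at h4
    linarith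
  -- relation X³ = Y³
  have hbcube : bx ^ 3 - bY ^ 3 = 0 := by
    show mkw (X 0) ^ 3 - mkw (X 1) ^ 3 = 0
    calc mkw (X 0) ^ 3 - mkw (X 1) ^ 3 = mkw ((X 0 : R2)^3 - (X 1)^3) := by
          rw [map_sub, map_pow, map_pow]
    _ = 0 := Ideal.Quotient.eq_zero_iff_mem.mpr g4_mem
  have hPQ3 : (L + r) ^ 3 - (L' + s) ^ 3 ∈ Iw := by
    rw [← Ideal.Quotient.eq_zero_iff_mem]
    calc Ideal.Quotient.mk Iw ((L + r)^3 - (L' + s)^3)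
        = mkw ((L + r))^3 - mkw ((L' + s))^3 := by rw [show Ideal.Quotient.mk Iw = ⇑mkw from rfl, map_sub, map_pow, map_pow]
    _ = (φ bx)^3 - (φ bY)^3 := by rw [hP, hQ]
    _ = φ (bx^3 - bY^3) := by rw [map_sub, map_pow, map_pow]
    _ = 0 := by rw [hbcube, map_zero]
  have hcrossP3 := cube_cross (a := a) (b := b) hr
  have hcrossQ3 := cube_cross (a := c) (b := d) hs
  have hE4 : a^2*b = c^2*d := by
    have h1 := lamA_Iw hPQ3
    have h2 := coeff_J_pow 4 _ hcrossP3 (e 2 1) (by simp [e_apply0, e_apply1])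
    have h3 := coeff_J_pow 4 _ hcrossQ3 (e 2 1) (by simp [e_apply0, e_apply1])
    simp only [coeff_sub] at h1 h2 h3
    have h4 := coeff_L3_A a b
    have h5 := coeff_L3_A c d
    rw [← hLdef] at h4
    rw [← hL'def] at h5
    linarith
  have hE5 : a*b^2 = c*d^2 := by
    have h1 := lamB_Iw hPQ3
    have h2 := coeff_J_pow 4 _ hcrossP3 (e 1 2) (by simp [e_apply0, e_apply1])
    have h3 := coeff_J_pow 4 _ hcrossQ3 (e 1 2) (by simp [e_apply0, e_apply1])
    simp only [coeff_sub] at h1 h2 h3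
    have h4 := coeff_L3_B a b
    have h5 := coeff_L3_B c d
    rw [← hLdef] at h4
    rw [← hL'def] at h5
    linarith
  have hE6 : a^3 + b^3 = c^3 + d^3 := by
    have h1 := lamC_Iw hPQ3
    have h2 := coeff_J_pow 4 _ hcrossP3 (e 3 0) (by simp [e_apply0, e_apply1])
    have h2' := coeff_J_pow 4 _ hcrossP3 (e 0 3) (by simp [e_apply0, e_apply1])
    have h3 := coeff_J_pow 4 _ hcrossQ3 (e 3 0) (by simp [e_apply0, e_apply1])
    have h3' := coeff_J_pow 4 _ hcrossQ3 (e 0 3) (by simp [e_apply0, e_apply1])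
    simp only [coeff_sub] at h1 h2 h2' h3 h3'
    have h4 := coeff_L3_C a b
    have h5 := coeff_L3_C c d
    rw [← hLdef] at h4
    rw [← hL'def] at h5
    linarith
  -- φ.symm preserves mIdeal and mIdeal ^ 2
  have hJ2J : Jw ^ 2 ≤ Jw := by
    have h := Ideal.pow_le_pow_right (I := Jw) (show 1 ≤ 2 by omega)
    simpa using h
  have hψbx : φ.symm bx ∈ mIdeal := by
    rw [hP2, mIdeal_eq]
    exact Ideal.mem_map_of_mem _ (Ideal.add_mem _ (L_mem a2 b2) (hJ2J hr2))
  have hψbY : φ.symm bY ∈ mIdeal := by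
    rw [hQ2, mIdeal_eq]
    exact Ideal.mem_map_of_mem _ (Ideal.add_mem _ (L_mem c2 d2) (hJ2J hs2))
  have hψJ : ∀ z ∈ mIdeal, φ.symm z ∈ mIdeal := by
    intro z hz
    rw [mIdeal] at hz
    obtain ⟨u, v, rfl⟩ := Ideal.mem_span_pair.mp hz
    rw [map_add, map_mul, map_mul]
    exact Ideal.add_mem _ (Ideal.mul_mem_left _ _ hψbx) (Ideal.mul_mem_left _ _ hψbY)
  have hψ2 : ∀ z ∈ mIdeal ^ 2, φ.symm z ∈ mIdeal ^ 2 := by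
    intro z hz
    have hz2 : z ∈ mIdeal * mIdeal := le_of_eq (pow_two mIdeal) hz
    refine Submodule.mul_induction_on hz2 (fun x hx y hy => ?_) (fun x y hx hy => ?_)
    · rw [map_mul]
      have hle : mIdeal * mIdeal ≤ mIdeal ^ 2 := le_of_eq (pow_two mIdeal).symm
      exact hle (Ideal.mul_mem_mul (hψJ x hx) (hψJ y hy))
    · rw [map_add]; exact Ideal.add_mem _ hx hy
  -- the unit equations coming from φ.symm ∘ φ = id
  have hmksplit : ∀ (u v : ℝ) (t : R2), mkw (C u * X 0 + C v * X 1 + t)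
      = u • mkw (X 0) + v • mkw (X 1) + mkw t := by
    intro u v t
    rw [smul_mkw, smul_mkw, ← map_add mkw, ← map_add mkw]
  obtain ⟨w1, hw1J, hw1⟩ := mIdeal2_rep (hψ2 _ (mem_mIdeal2 hr))
  obtain ⟨w2, hw2J, hw2⟩ := mIdeal2_rep (hψ2 _ (mem_mIdeal2 hs))
  have hkey1 : (X 0 : R2) - (C a * (C a2 * X 0 + C b2 * X 1 + r2)
      + C b * (C c2 * X 0 + C d2 * X 1 + s2) + w1) ∈ Iw := by
    refine Ideal.Quotient.eq.mp ?_
    show mkw (X 0) = mkw _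
    calc mkw (X 0) = φ.symm (φ bx) := (φ.symm_apply_apply bx).symm
    _ = φ.symm (a • mkw (X 0) + b • mkw (X 1) + mkw r) := by rw [hP, hLdef, hmksplit]
    _ = a • φ.symm bx + b • φ.symm bY + φ.symm (mkw r) := by
        rw [map_add, map_add, map_smul, map_smul]; rfl
    _ = a • mkw (C a2 * X 0 + C b2 * X 1 + r2) + b • mkw (C c2 * X 0 + C d2 * X 1 + s2)
          + mkw w1 := by rw [hP2, hQ2, hw1]
    _ = mkw (C a * (C a2 * X 0 + C b2 * X 1 + r2)
          + C b * (C c2 * X 0 + C d2 * X 1 + s2) + w1) := by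
        rw [smul_mkw, smul_mkw, ← map_add mkw, ← map_add mkw]
  have hkey2 : (X 1 : R2) - (C c * (C a2 * X 0 + C b2 * X 1 + r2)
      + C d * (C c2 * X 0 + C d2 * X 1 + s2) + w2) ∈ Iw := by
    refine Ideal.Quotient.eq.mp ?_
    show mkw (X 1) = mkw _
    calc mkw (X 1) = φ.symm (φ bY) := (φ.symm_apply_apply bY).symm
    _ = φ.symm (c • mkw (X 0) + d • mkw (X 1) + mkw s) := by rw [hQ, hL'def, hmksplit]
    _ = c • φ.symm bx + d • φ.symm bY + φ.symm (mkw s) := by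
        rw [map_add, map_add, map_smul, map_smul]; rfl
    _ = c • mkw (C a2 * X 0 + C b2 * X 1 + r2) + d • mkw (C c2 * X 0 + C d2 * X 1 + s2)
          + mkw w2 := by rw [hP2, hQ2, hw2]
    _ = mkw (C c * (C a2 * X 0 + C b2 * X 1 + r2)
          + C d * (C c2 * X 0 + C d2 * X 1 + s2) + w2) := by
        rw [smul_mkw, smul_mkw, ← map_add mkw, ← map_add mkw]
  have hu1 : a * a2 + b * c2 = 1 := by
    have h := lamX_Iw hkey1
    have h3 := coeff_J_pow 2 _ hw1J (e 1 0) (by simp [e_apply0, e_apply1])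
    have h4 := coeff_J_pow 2 _ hr2 (e 1 0) (by simp [e_apply0, e_apply1])
    have h5 := coeff_J_pow 2 _ hs2 (e 1 0) (by simp [e_apply0, e_apply1])
    simp only [coeff_sub, coeff_add, coeff_C_mul, coeff_e10_X0, coeff_e10_X1, coeff_e01_X0,
      coeff_e01_X1, h3, h4, h5, mul_one, mul_zero, add_zero] at h
    linarith
  have hu2 : a * b2 + b * d2 = 0 := by
    have h := lamY_Iw hkey1
    have h3 := coeff_J_pow 2 _ hw1J (e 0 1) (by simp [e_apply0, e_apply1])
    have h4 := coeff_J_pow 2 _ hr2 (e 0 1) (by simp [e_apply0, e_apply1])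
    have h5 := coeff_J_pow 2 _ hs2 (e 0 1) (by simp [e_apply0, e_apply1])
    simp only [coeff_sub, coeff_add, coeff_C_mul, coeff_e10_X0, coeff_e10_X1, coeff_e01_X0,
      coeff_e01_X1, h3, h4, h5, mul_one, mul_zero, add_zero] at h
    linarith
  have hu3 : c * a2 + d * c2 = 0 := by
    have h := lamX_Iw hkey2
    have h3 := coeff_J_pow 2 _ hw2J (e 1 0) (by simp [e_apply0, e_apply1])
    have h4 := coeff_J_pow 2 _ hr2 (e 1 0) (by simp [e_apply0, e_apply1])
    have h5 := coeff_J_pow 2 _ hs2 (e 1 0) (by simp [e_apply0, e_apply1])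
    simp only [coeff_sub, coeff_add, coeff_C_mul, coeff_e10_X0, coeff_e10_X1, coeff_e01_X0,
      coeff_e01_X1, h3, h4, h5, mul_one, mul_zero, add_zero] at h
    linarith
  have hu4 : c * b2 + d * d2 = 1 := by
    have h := lamY_Iw hkey2
    have h3 := coeff_J_pow 2 _ hw2J (e 0 1) (by simp [e_apply0, e_apply1])
    have h4 := coeff_J_pow 2 _ hr2 (e 0 1) (by simp [e_apply0, e_apply1])
    have h5 := coeff_J_pow 2 _ hs2 (e 0 1) (by simp [e_apply0, e_apply1])
    simp only [coeff_sub, coeff_add, coeff_C_mul, coeff_e10_X0, coeff_e10_X1, coeff_e01_X0,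
      coeff_e01_X1, h3, h4, h5, mul_one, mul_zero, add_zero] at h
    linarith
  have hdet : (a*d - b*c) * (a2*d2 - b2*c2) = 1 := by
    calc (a*d - b*c) * (a2*d2 - b2*c2)
        = (a*a2 + b*c2)*(c*b2 + d*d2) - (a*b2 + b*d2)*(c*a2 + d*c2) := by ring
    _ = 1 := by rw [hu1, hu2, hu3, hu4]; ring
  have hdetne : a*d - b*c ≠ 0 := by
    intro h
    rw [h, zero_mul] at hdet
    norm_num at hdet
  by_cases hc0 : c = 0
  · -- linear part is diagonal
    have hb0 : b = 0 := by
      have ha2b : a^2*b = 0 := by rw [hc0] at hE4; simpa using hE4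
      rcases mul_eq_zero.mp ha2b with h | h
      · exfalso
        have ha : a = 0 := by
          have := pow_eq_zero_iff (n := 2) (by norm_num) |>.mp h
          exact this
        apply hdetne
        rw [ha, hc0]; ring
      · exact h
    have had : a = d := by
      refine cube_inj ?_
      rw [hb0, hc0] at hE6
      simpa using hE6
    have hane : a ≠ 0 := by
      intro h
      apply hdetne
      rw [h, hb0]; ring
    refine ⟨a, hane, ?_, ?_⟩
    · have heq : φ bx - a • bx = mkw (C b * X 1 + r) := by
        rw [hP, hLdef, bx_eq, smul_mkw]
        calc mkw (C a * X 0 + C b * X 1 + r) - mkw (C a * X 0)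
            = mkw (C a * X 0 + C b * X 1 + r - C a * X 0) := (map_sub mkw _ _).symm
        _ = mkw (C b * X 1 + r) := by congr 1; ring
      rw [heq, hb0]
      have h : C (0:ℝ) * X 1 + r = r := by simp
      rw [h]
      exact mem_mIdeal2 hr
    · have heq : φ bY - a • bY = mkw (C c * X 0 + (C d * X 1 - C a * X 1) + s) := by
        rw [hQ, hL'def, bY_eq, smul_mkw]
        calc mkw (C c * X 0 + C d * X 1 + s) - mkw (C a * X 1)
            = mkw (C c * X 0 + C d * X 1 + s - C a * X 1) := (map_sub mkw _ _).symm
        _ = mkw (C c * X 0 + (C d * X 1 - C a * X 1) + s) := by congr 1; ring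
      rw [heq, hc0, ← had]
      have h : C (0:ℝ) * X 0 + (C a * X 1 - C a * X 1) + s = s := by simp
      rw [h]
      exact mem_mIdeal2 hs
  · exfalso
    have hd0 : d ≠ 0 := by
      intro h
      rw [h] at hE3
      have h4 : c^4 = 0 := by linarith [hE3]; 
      exact hc0 (pow_eq_zero_iff (n := 4) (by norm_num) |>.mp h4)
    have hab : a*b = c*d := by
      refine cube_inj ?_
      have : (a*b)^3 = (c*d)^3 := by linear_combination (a*b^2)*hE4 + (c^2*d)*hE5
      simpa using this
    have habne : a*b ≠ 0 := by rw [hab]; exact mul_ne_zero hc0 hd0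
    have key : a*b*(a*d - b*c) = 0 := by linear_combination d*hE4 - c*hE5
    rcases mul_eq_zero.mp key with h | h
    · exact habne h
    · exact hdetne h
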